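/- In any finite tree there exists a vertex such that after removing this vertex, every connected component of the remaining graph contains at most half of the leaves of the original tree. -/

import Mathlib

/-- The graph obtained from `G` by deleting the vertex `v` (and its incident edges). -/
def SimpleGraph.deleteVert {V : Type*} (G : SimpleGraph V) (v : V) : SimpleGraph V where
  Adj a b := G.Adj a b ∧ a ≠ v ∧ b ≠ v
  symm := by constructor; intro a b h; exact ⟨h.1.symm, h.2.2, h.2.1⟩
  loopless := by constructor; intro a h; exact h.1.ne rfl

set_option linter.unusedSectionVars false

open SimpleGraph

section Aux
variable {V : Type*} [DecidableEq V] {G : SimpleGraph V}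

lemma reach_del_of_walk {v a b : V} (p : G.Walk a b) (hv : v ∉ p.support) :
    (G.deleteVert v).Reachable a b := by
  induction p with
  | nil => exact Reachable.refl _
  | @cons a c b h p ih =>
    simp only [Walk.support_cons, List.mem_cons] at hv
    push_neg at hv
    exact (SimpleGraph.Adj.reachable
      (⟨h, Ne.symm hv.1, fun hc => hv.2 (hc ▸ p.start_mem_support)⟩ :
        (G.deleteVert v).Adj a c)).trans (ih hv.2)

lemma exists_walk_avoiding {v a b : V} (ha : a ≠ v) (p : (G.deleteVert v).Walk a b) :
    ∃ q : G.Walk a b, v ∉ q.support := by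
  induction p with
  | nil => exact ⟨Walk.nil, by simp [Ne.symm ha]⟩
  | @cons a c b h p ih =>
    obtain ⟨q, hq⟩ := ih h.2.2
    exact ⟨Walk.cons h.1 q, by simp [hq, Ne.symm h.2.1]⟩

lemma eq_of_reach_del {v w : V} (h : (G.deleteVert v).Reachable v w) : v = w := by
  obtain ⟨p⟩ := h
  cases p with
  | nil => rfl
  | cons h p => exact absurd rfl h.2.1

/-- Key separation: if `v ~ u`, a vertex can't be both in `v`'s side of `G - u`
and in `u`'s side of `G - v`. -/
lemma not_both (hT : G.IsTree) {v u x : V} (hadj : G.Adj v u)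
    (h1 : (G.deleteVert u).Reachable v x) (h2 : (G.deleteVert v).Reachable u x) : False := by
  obtain ⟨p0⟩ := h1
  obtain ⟨p, hp⟩ := exists_walk_avoiding hadj.ne p0
  obtain ⟨q0⟩ := h2
  obtain ⟨q, hq⟩ := exists_walk_avoiding hadj.ne' q0
  have hq' : v ∉ q.toPath.1.support := fun h => hq (q.support_toPath_subset h)
  have hw2 : (Walk.cons hadj q.toPath.1).IsPath :=
    (Walk.cons_isPath_iff _ _).2 ⟨q.toPath.2, hq'⟩
  have hp' : u ∉ p.toPath.1.support := fun h => hp (p.support_toPath_subset h)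
  have := hT.IsAcyclic.path_unique p.toPath ⟨Walk.cons hadj q.toPath.1, hw2⟩
  apply hp'
  rw [this]
  simp [Walk.support_cons]

end Aux

section Aux2
variable {V : Type*} [DecidableEq V] {G : SimpleGraph V}

/-- If `v ~ u` and `x` is not on `v`'s side of `G - u`, then `x ≠ u` lies on
`u`'s side of `G - v`. -/
lemma mem_side (hT : G.IsTree) {v u x : V} (hadj : G.Adj v u)
    (hx : ¬ (G.deleteVert u).Reachable v x) (hxu : x ≠ u) :
    (G.deleteVert v).Reachable u x := by
  obtain ⟨p0⟩ := hT.isConnected.preconnected u x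
  set p := p0.toPath.1 with hpdef
  have hp : p.IsPath := p0.toPath.2
  by_cases hv : v ∈ p.support
  · exfalso
    apply hx
    refine reach_del_of_walk (p.dropUntil v hv) ?_
    intro hu
    have hspec := p.take_spec hv
    have hnodup := hp.support_nodup
    rw [← hspec, Walk.support_append] at hnodup
    have hdisj := List.disjoint_of_nodup_append hnodup
    have hu1 : u ∈ (p.takeUntil v hv).support := (p.takeUntil v hv).start_mem_support
    have hu2 : u ∉ (p.dropUntil v hv).support.tail := hdisj hu1
    rw [(p.dropUntil v hv).support_eq_cons] at hu
    rcases List.mem_cons.mp hu with hu | hu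
    · exact hadj.ne' hu
    · exact hu2 hu
  · exact reach_del_of_walk p hv

/-- Every component of `G - v` contains a neighbour of `v`. -/
lemma exists_adj_mem (hT : G.IsTree) {v w : V} (hw : w ≠ v) :
    ∃ u, G.Adj v u ∧ (G.deleteVert v).Reachable w u := by
  obtain ⟨p0⟩ := hT.isConnected.preconnected v w
  have hp : p0.toPath.1.IsPath := p0.toPath.2
  set p := p0.toPath.1 with hpdef
  cases hq : p with
  | nil => exact absurd rfl (Ne.symm hw)
  | @cons _ c _ h q =>
    rw [hq, Walk.cons_isPath_iff] at hp
    exact ⟨c, h, (reach_del_of_walk q hp.2).symm⟩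
end Aux2


/-- In any finite tree there is a vertex whose removal leaves every connected
component with at most half of the leaves (degree-one vertices) of the original tree. -/
theorem exists_vertex_halving_leaves {V : Type*} [Fintype V] [DecidableEq V]
    (G : SimpleGraph V) [DecidableRel G.Adj] (hT : G.IsTree) :
    ∃ v : V, ∀ w : V, w ≠ v →
      2 * {u : V | (G.deleteVert v).Reachable w u ∧ G.degree u = 1}.ncard ≤
        {u : V | G.degree u = 1}.ncard := by

  by_contra hc
  push_neg at hc
  set L : Set V := {u | G.degree u = 1} with hL
  -- the set of sizes of components witnessing badness
  set S : Set ℕ := {n | ∃ v w, w ≠ v ∧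
      L.ncard < 2 * {u : V | (G.deleteVert v).Reachable w u ∧ G.degree u = 1}.ncard ∧
      {u : V | (G.deleteVert v).Reachable w u}.ncard = n} with hS
  have hSne : S.Nonempty := by
    obtain ⟨v⟩ := hT.isConnected.nonempty
    obtain ⟨w, hw, hb⟩ := hc v
    exact ⟨_, v, w, hw, hb, rfl⟩
  obtain ⟨v, w, hwv, hbad, hn⟩ := Nat.sInf_mem hSne
  -- C is the offending component of G - v, with u a neighbour of v inside it
  set C : Set V := {u : V | (G.deleteVert v).Reachable w u} with hC
  obtain ⟨u, hadj, huC⟩ := exists_adj_mem hT hwv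
  -- the component of v in G - u has at most half the leaves
  have hgood : 2 * {x : V | (G.deleteVert u).Reachable v x ∧ G.degree x = 1}.ncard ≤ L.ncard := by
    set A : Set V := {x : V | (G.deleteVert u).Reachable v x ∧ G.degree x = 1} with hA
    set B : Set V := {x : V | (G.deleteVert v).Reachable w x ∧ G.degree x = 1} with hB
    have hdisj : Disjoint A B := by
      rw [Set.disjoint_left]
      rintro x ⟨hx1, -⟩ ⟨hx2, -⟩
      exact not_both hT hadj hx1 (huC.symm.trans hx2)
    have hsub : A ∪ B ⊆ L := by
      rintro x (⟨-, hx⟩ | ⟨-, hx⟩) <;> exact hx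
    have h1 : A.ncard + B.ncard ≤ L.ncard := by
      rw [← Set.ncard_union_eq hdisj A.toFinite B.toFinite]
      exact Set.ncard_le_ncard hsub L.toFinite
    omega
  -- the bad component of u
  obtain ⟨w', hw'u, hbad'⟩ := hc u
  have hw'A : ¬ (G.deleteVert u).Reachable v w' := by
    intro hr
    apply absurd hbad' (not_lt.mpr ?_)
    have : {x : V | (G.deleteVert u).Reachable w' x ∧ G.degree x = 1} =
        {x : V | (G.deleteVert u).Reachable v x ∧ G.degree x = 1} := by
      ext x
      exact and_congr_left fun _ => ⟨fun h => hr.trans h, fun h => hr.symm.trans h⟩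
    rw [this]
    exact hgood
  -- the bad component of u sits strictly inside C
  have hsub : {x : V | (G.deleteVert u).Reachable w' x} ⊆ C \ {u} := by
    intro x hx
    have hxu : x ≠ u := by
      intro h
      exact hw'u (eq_of_reach_del (h ▸ hx : (G.deleteVert u).Reachable w' u).symm).symm
    have hxA : ¬ (G.deleteVert u).Reachable v x := fun hr => hw'A (hr.trans hx.symm)
    exact ⟨huC.trans (mem_side hT hadj hxA hxu), hxu⟩
  have hlt : {x : V | (G.deleteVert u).Reachable w' x}.ncard < C.ncard := by
    refine Set.ncard_lt_ncard ?_ C.toFinite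
    refine ⟨hsub.trans Set.diff_subset, fun h => ?_⟩
    exact ((h.trans hsub) huC).2 rfl
  have hmem : {x : V | (G.deleteVert u).Reachable w' x}.ncard ∈ S :=
    ⟨u, w', hw'u, hbad', rfl⟩
  have := Nat.sInf_le hmem
  omega
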